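/- For every ξ > 0 and C > 0 there exists ζ > 0 such that the following holds for every positive integer n and every p ∈ [0,1] with p ≤ C·n^{−1/2}: if F ⊆ [n]³ is a collection of non-degenerate Schur triples with |F| ≥ ξ·n², then the probability that no triple (x,y,z) ∈ F has all of x, y, z in [n]_p is at most exp(−ζ·n²·p³). -/

import Mathlib

open Filter

/-- The probability that the random subset `[m]_p` of `{1, …, m}`, in which each element is
included independently with probability `p`, lies in the event `E`. -/
noncomputable def randProb (m : ℕ) (p : ℝ) (E : Set (Finset ℕ)) : ℝ :=
  ∑ S ∈ (Finset.Icc 1 m).powerset,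
    E.indicator (fun T => p ^ T.card * (1 - p) ^ (m - T.card)) S

namespace Stmt5Aux

variable {α : Type*} [DecidableEq α]

/-- Expectation of `f` under the product Bernoulli(p) measure on subsets of `A`. -/
noncomputable def Ev (p : ℝ) (A : Finset α) (f : Finset α → ℝ) : ℝ :=
  ∑ S ∈ A.powerset, (p ^ S.card * (1 - p) ^ (A \ S).card) * f S

lemma Ev_congr {p : ℝ} {A : Finset α} {f g : Finset α → ℝ}
    (h : ∀ S ∈ A.powerset, f S = g S) : Ev p A f = Ev p A g := by
  unfold Ev; exact Finset.sum_congr rfl (fun S hS => by rw [h S hS])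

lemma Ev_insert {p : ℝ} {a : α} {A : Finset α} (ha : a ∉ A) (f : Finset α → ℝ) :
    Ev p (insert a A) f
      = p * Ev p A (fun S => f (insert a S)) + (1 - p) * Ev p A f := by
  unfold Ev
  rw [Finset.powerset_insert, Finset.sum_union, Finset.sum_image]
  · have h1 : ∀ S ∈ A.powerset,
        (p ^ (insert a S).card * (1 - p) ^ (insert a A \ insert a S).card) * f (insert a S)
        = p * ((p ^ S.card * (1 - p) ^ (A \ S).card) * f (insert a S)) := by
      intro S hS
      have hS' : S ⊆ A := Finset.mem_powerset.1 hS
      have haS : a ∉ S := fun h => ha (hS' h)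
      have e1 : (insert a S).card = S.card + 1 := Finset.card_insert_of_notMem haS
      have e2 : insert a A \ insert a S = A \ S := by
        ext x
        simp only [Finset.mem_sdiff, Finset.mem_insert]
        constructor
        · rintro ⟨hx1 | hx1, hx2⟩
          · exact absurd (Or.inl hx1) hx2
          · exact ⟨hx1, fun hxs => hx2 (Or.inr hxs)⟩
        · rintro ⟨hx1, hx2⟩
          exact ⟨Or.inr hx1, by rintro (rfl | h); exacts [ha hx1, hx2 h]⟩
      rw [e1, e2]; ring
    have h2 : ∀ S ∈ A.powerset,
        (p ^ S.card * (1 - p) ^ (insert a A \ S).card) * f S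
        = (1 - p) * ((p ^ S.card * (1 - p) ^ (A \ S).card) * f S) := by
      intro S hS
      have hS' : S ⊆ A := Finset.mem_powerset.1 hS
      have haS : a ∉ S := fun h => ha (hS' h)
      have e2 : insert a A \ S = insert a (A \ S) := Finset.insert_sdiff_of_notMem _ haS
      have e3 : a ∉ A \ S := fun h => ha (Finset.mem_sdiff.1 h).1
      rw [e2, Finset.card_insert_of_notMem e3]; ring
    rw [Finset.sum_congr rfl h2, Finset.sum_congr rfl h1, ← Finset.mul_sum, ← Finset.mul_sum]
    ring
  · intro S hS T hT hST
    have hS' : a ∉ S := fun h => ha ((Finset.mem_powerset.1 hS) h)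
    have hT' : a ∉ T := fun h => ha ((Finset.mem_powerset.1 hT) h)
    have := congrArg (fun X => Finset.erase X a) hST
    simpa [Finset.erase_insert hS', Finset.erase_insert hT'] using this
  · rw [Finset.disjoint_left]
    intro S hS hS2
    obtain ⟨T, hT, rfl⟩ := Finset.mem_image.1 hS2
    exact ha ((Finset.mem_powerset.1 hS) (Finset.mem_insert_self a T))

lemma Ev_one {p : ℝ} (A : Finset α) : Ev p A (fun _ => (1 : ℝ)) = 1 := by
  induction A using Finset.induction_on with
  | empty => simp [Ev]
  | insert _ _ ha ih => rw [Ev_insert ha]; rw [ih]; ring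

lemma Ev_mono {p : ℝ} (hp0 : 0 ≤ p) (hp1 : p ≤ 1) {A : Finset α} {f g : Finset α → ℝ}
    (h : ∀ S ∈ A.powerset, f S ≤ g S) : Ev p A f ≤ Ev p A g := by
  unfold Ev
  refine Finset.sum_le_sum fun S hS => ?_
  have h1p : (0:ℝ) ≤ 1 - p := by linarith
  have : (0:ℝ) ≤ p ^ S.card * (1 - p) ^ (A \ S).card := by positivity
  exact mul_le_mul_of_nonneg_left (h S hS) this

lemma Ev_nonneg {p : ℝ} (hp0 : 0 ≤ p) (hp1 : p ≤ 1) {A : Finset α} {f : Finset α → ℝ}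
    (h : ∀ S ∈ A.powerset, 0 ≤ f S) : 0 ≤ Ev p A f := by
  have := Ev_mono (f := fun _ => (0:ℝ)) (g := f) hp0 hp1 (A := A) (by simpa using h)
  simpa [Ev] using this

lemma Ev_le_one {p : ℝ} (hp0 : 0 ≤ p) (hp1 : p ≤ 1) {A : Finset α} {f : Finset α → ℝ}
    (h : ∀ S ∈ A.powerset, f S ≤ 1) : Ev p A f ≤ 1 := by
  have := Ev_mono (f := f) (g := fun _ => (1:ℝ)) hp0 hp1 (A := A) h
  rwa [Ev_one] at this

lemma Ev_sub {p : ℝ} {A : Finset α} (f g : Finset α → ℝ) :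
    Ev p A (fun S => f S - g S) = Ev p A f - Ev p A g := by
  unfold Ev; rw [← Finset.sum_sub_distrib]; exact Finset.sum_congr rfl fun S _ => by ring

lemma Ev_smul {p : ℝ} {A : Finset α} (c : ℝ) (f : Finset α → ℝ) :
    Ev p A (fun S => c * f S) = c * Ev p A f := by
  unfold Ev; rw [Finset.mul_sum]; exact Finset.sum_congr rfl fun S _ => by ring

lemma Ev_sum {p : ℝ} {A : Finset α} {ι : Type*} (I : Finset ι) (g : ι → Finset α → ℝ) :
    Ev p A (fun S => ∑ i ∈ I, g i S) = ∑ i ∈ I, Ev p A (g i) := by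
  unfold Ev
  rw [Finset.sum_comm]
  exact Finset.sum_congr rfl fun S _ => by rw [Finset.mul_sum]


/-- Harris / FKG inequality for the finite product Bernoulli measure. -/
lemma harris {p : ℝ} (hp0 : 0 ≤ p) (hp1 : p ≤ 1) (A : Finset α) :
    ∀ f g : Finset α → ℝ, (∀ S T : Finset α, S ⊆ T → f S ≤ f T) →
      (∀ S T : Finset α, S ⊆ T → g S ≤ g T) →
      Ev p A f * Ev p A g ≤ Ev p A (fun S => f S * g S) := by
  induction A using Finset.induction_on with
  | empty => intro f g _ _; simp [Ev]
  | @insert a A ha ih =>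
    intro f g hf hg
    have hf' : ∀ S T : Finset α, S ⊆ T → f (insert a S) ≤ f (insert a T) :=
      fun S T h => hf _ _ (Finset.insert_subset_insert a h)
    have hg' : ∀ S T : Finset α, S ⊆ T → g (insert a S) ≤ g (insert a T) :=
      fun S T h => hg _ _ (Finset.insert_subset_insert a h)
    have h1 := ih (fun S => f (insert a S)) (fun S => g (insert a S)) hf' hg'
    have h0 := ih f g hf hg
    rw [Ev_insert ha, Ev_insert ha, Ev_insert ha]
    set F1 := Ev p A (fun S => f (insert a S)) with hF1
    set F0 := Ev p A f with hF0
    set G1 := Ev p A (fun S => g (insert a S)) with hG1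
    set G0 := Ev p A g with hG0
    have hDF : F0 ≤ F1 := Ev_mono hp0 hp1 (fun S _ => hf _ _ (Finset.subset_insert a S))
    have hDG : G0 ≤ G1 := Ev_mono hp0 hp1 (fun S _ => hg _ _ (Finset.subset_insert a S))
    have key : Ev p A (fun S => f (insert a S) * g (insert a S)) ≥ F1 * G1 := h1
    have key0 : Ev p A (fun S => f S * g S) ≥ F0 * G0 := h0
    have : (p * F1 + (1 - p) * F0) * (p * G1 + (1 - p) * G0)
        ≤ p * (F1 * G1) + (1 - p) * (F0 * G0) := by nlinarith [mul_nonneg (mul_nonneg hp0 (by linarith : (0:ℝ) ≤ 1 - p)) (mul_nonneg (by linarith : (0:ℝ) ≤ F1 - F0) (by linarith : (0:ℝ) ≤ G1 - G0))]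
    calc (p * F1 + (1 - p) * F0) * (p * G1 + (1 - p) * G0)
        ≤ p * (F1 * G1) + (1 - p) * (F0 * G0) := this
      _ ≤ p * Ev p A (fun S => f (insert a S) * g (insert a S))
            + (1 - p) * Ev p A (fun S => f S * g S) := by
          have hp1' : (0:ℝ) ≤ 1 - p := by linarith
          gcongr

/-- If `b ∈ A` and `h` does not depend on the coordinate `b`, then the indicator of
`b ∈ S` factors out. -/
lemma Ev_point (p : ℝ) (b : α) :
    ∀ A : Finset α, b ∈ A → ∀ h : Finset α → ℝ, (∀ S, h S = h (S.erase b)) →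
      Ev p A (fun S => (if b ∈ S then (1:ℝ) else 0) * h S) = p * Ev p A h := by
  intro A
  induction A using Finset.induction_on with
  | empty => simp
  | @insert a A ha ih =>
    intro hb h hh
    rw [Ev_insert ha, Ev_insert ha]
    by_cases hab : a = b
    · subst hab
      have hA : ∀ S ∈ A.powerset, h (insert a S) = h S := by
        intro S hS
        have haS : a ∉ S := fun hx => ha ((Finset.mem_powerset.1 hS) hx)
        rw [hh (insert a S), Finset.erase_insert haS]
      have e1 : Ev p A (fun S => (if a ∈ insert a S then (1:ℝ) else 0) * h (insert a S))
          = Ev p A h := by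
        refine Ev_congr fun S hS => ?_
        rw [if_pos (Finset.mem_insert_self a S), one_mul, hA S hS]
      have e2 : Ev p A (fun S => (if a ∈ S then (1:ℝ) else 0) * h S) = 0 := by
        have : Ev p A (fun S => (if a ∈ S then (1:ℝ) else 0) * h S)
            = Ev p A (fun _ => (0:ℝ)) := by
          refine Ev_congr fun S hS => ?_
          have haS : a ∉ S := fun hx => ha ((Finset.mem_powerset.1 hS) hx)
          rw [if_neg haS, zero_mul]
        rw [this]; simp [Ev]
      have e3 : Ev p A (fun S => h (insert a S)) = Ev p A h := Ev_congr hA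
      rw [e1, e2, e3]; ring
    · have hb' : b ∈ A := by
        rcases Finset.mem_insert.1 hb with h' | h'
        · exact absurd h'.symm hab
        · exact h'
      have hh' : ∀ S, h (insert a S) = h ((insert a S).erase b) := fun S => hh _
      have hh'' : ∀ S, (fun S => h (insert a S)) S = (fun S => h (insert a S)) (S.erase b) := by
        intro S
        simp only
        rw [hh (insert a S), Finset.erase_insert_of_ne hab]
      have e1 : Ev p A (fun S => (if b ∈ insert a S then (1:ℝ) else 0) * h (insert a S))
          = Ev p A (fun S => (if b ∈ S then (1:ℝ) else 0) * h (insert a S)) := by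
        refine Ev_congr fun S hS => ?_
        have : b ∈ insert a S ↔ b ∈ S := by
          constructor
          · intro h'
            rcases Finset.mem_insert.1 h' with h'' | h''
            · exact absurd h''.symm hab
            · exact h''
          · exact fun h' => Finset.mem_insert_of_mem h'
        rw [if_congr this rfl rfl]
      rw [e1, ih hb' (fun S => h (insert a S)) hh'', ih hb' h hh]
      ring

/-- If `B ⊆ A` and `h` does not depend on coordinates in `B`, the indicator of
`B ⊆ S` factors out as `p ^ |B|`. -/
lemma Ev_cube (p : ℝ) :
    ∀ B : Finset α, ∀ A : Finset α, B ⊆ A → ∀ h : Finset α → ℝ,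
      (∀ S, h S = h (S \ B)) →
      Ev p A (fun S => (if B ⊆ S then (1:ℝ) else 0) * h S) = p ^ B.card * Ev p A h := by
  intro B
  induction B using Finset.induction_on with
  | empty => intro A _ h _; simp
  | @insert b B hb ih =>
    intro A hBA h hh
    have hbA : b ∈ A := hBA (Finset.mem_insert_self b B)
    have hBA' : B ⊆ A := (Finset.subset_insert b B).trans hBA
    have hsplit : ∀ S : Finset α,
        (if insert b B ⊆ S then (1:ℝ) else 0)
          = (if b ∈ S then (1:ℝ) else 0) * (if B ⊆ S then (1:ℝ) else 0) := by
      intro S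
      by_cases h1 : b ∈ S <;> by_cases h2 : B ⊆ S <;>
        simp [Finset.insert_subset_iff, h1, h2]
    have hh1 : ∀ S, h S = h (S \ B) := by
      intro S
      rw [hh S, hh (S \ B)]
      congr 1
      ext x; simp only [Finset.mem_sdiff, Finset.mem_insert]
      tauto
    -- inner function for Ev_point
    set h1 : Finset α → ℝ := fun S => (if B ⊆ S then (1:ℝ) else 0) * h S with hh1def
    have hign : ∀ S, h1 S = h1 (S.erase b) := by
      intro S
      simp only [hh1def]
      have e1 : (B ⊆ S.erase b) ↔ (B ⊆ S) := by
        rw [Finset.subset_erase]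
        constructor
        · exact fun h => h.1
        · exact fun h => ⟨h, hb⟩
      have e2 : h (S.erase b) = h S := by
        rw [hh (S.erase b), hh S]
        congr 1
        ext x
        simp only [Finset.mem_sdiff, Finset.mem_erase, Finset.mem_insert]
        tauto
      rw [if_congr e1 rfl rfl, e2]
    have step1 : Ev p A (fun S => (if insert b B ⊆ S then (1:ℝ) else 0) * h S)
        = Ev p A (fun S => (if b ∈ S then (1:ℝ) else 0) * h1 S) := by
      refine Ev_congr fun S _ => ?_
      rw [hsplit S]; simp only [hh1def]; ring
    rw [step1, Ev_point p b A hbA h1 hign, ih A hBA' h hh1,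
      Finset.card_insert_of_notMem hb]
    ring

lemma Ev_cube_one {p : ℝ} {B A : Finset α} (hBA : B ⊆ A) :
    Ev p A (fun S => (if B ⊆ S then (1:ℝ) else 0)) = p ^ B.card := by
  have := Ev_cube p B A hBA (fun _ => (1:ℝ)) (fun _ => rfl)
  simpa [Ev_one] using this



/-! ### Janson's inequality for increasing-triple events -/

/-- The set of elements of a triple. -/
def trip (t : ℕ × ℕ × ℕ) : Finset ℕ := {t.1, t.2.1, t.2.2}

/-- Indicator of the event that all elements of `t` lie in `S`. -/
noncomputable def ind (t : ℕ × ℕ × ℕ) (S : Finset ℕ) : ℝ := if trip t ⊆ S then 1 else 0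

/-- Indicator of the event that no triple of `J` lies fully in `S`. -/
noncomputable def GG (J : Finset (ℕ × ℕ × ℕ)) (S : Finset ℕ) : ℝ :=
  ∏ t ∈ J, (1 - ind t S)

/-- Pair interaction term. -/
noncomputable def chi (p : ℝ) (s t : ℕ × ℕ × ℕ) : ℝ :=
  if s ≠ t ∧ (trip s ∩ trip t).Nonempty then p ^ (trip s ∪ trip t).card else 0

/-- Correlation sum `Δ`. -/
noncomputable def DD (p : ℝ) (J : Finset (ℕ × ℕ × ℕ)) : ℝ :=
  ∑ s ∈ J, ∑ t ∈ J, chi p s t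

lemma ind_nonneg (t : ℕ × ℕ × ℕ) (S : Finset ℕ) : 0 ≤ ind t S := by
  unfold ind; split <;> norm_num

lemma ind_le_one (t : ℕ × ℕ × ℕ) (S : Finset ℕ) : ind t S ≤ 1 := by
  unfold ind; split <;> norm_num

lemma ind_mono (t : ℕ × ℕ × ℕ) {S T : Finset ℕ} (h : S ⊆ T) : ind t S ≤ ind t T := by
  unfold ind
  by_cases h1 : trip t ⊆ S
  · rw [if_pos h1, if_pos (h1.trans h)]
  · rw [if_neg h1]; split <;> norm_num

lemma GG_nonneg (J : Finset (ℕ × ℕ × ℕ)) (S : Finset ℕ) : 0 ≤ GG J S :=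
  Finset.prod_nonneg fun t _ => by
    have := ind_le_one t S; linarith

lemma GG_le_one (J : Finset (ℕ × ℕ × ℕ)) (S : Finset ℕ) : GG J S ≤ 1 :=
  Finset.prod_le_one (fun t _ => by have := ind_le_one t S; linarith)
    (fun t _ => by have := ind_nonneg t S; linarith)

lemma GG_anti (J : Finset (ℕ × ℕ × ℕ)) {S T : Finset ℕ} (h : S ⊆ T) : GG J T ≤ GG J S :=
  Finset.prod_le_prod (fun t _ => by have := ind_le_one t T; linarith)
    (fun t _ => by have := ind_mono t h; linarith)

lemma GG_subset {J F : Finset (ℕ × ℕ × ℕ)} (h : J ⊆ F) (S : Finset ℕ) :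
    GG F S ≤ GG J S := by
  unfold GG
  rw [← Finset.prod_sdiff h]
  have h1 : ∏ t ∈ F \ J, (1 - ind t S) ≤ 1 :=
    Finset.prod_le_one (fun t _ => by have := ind_le_one t S; linarith)
      (fun t _ => by have := ind_nonneg t S; linarith)
  have h2 : (0:ℝ) ≤ ∏ t ∈ J, (1 - ind t S) := GG_nonneg J S
  nlinarith [GG_nonneg (F \ J) S]

lemma chi_nonneg {p : ℝ} (hp0 : 0 ≤ p) (s t : ℕ × ℕ × ℕ) : 0 ≤ chi p s t := by
  unfold chi; split
  · positivity
  · exact le_refl 0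

lemma DD_nonneg {p : ℝ} (hp0 : 0 ≤ p) (J : Finset (ℕ × ℕ × ℕ)) : 0 ≤ DD p J :=
  Finset.sum_nonneg fun s _ => Finset.sum_nonneg fun t _ => chi_nonneg hp0 s t

/-- Weierstrass product inequality. -/
lemma one_sub_sum_le_prod {ι : Type*} (J : Finset ι) (x : ι → ℝ)
    (h0 : ∀ i ∈ J, 0 ≤ x i) (h1 : ∀ i ∈ J, x i ≤ 1) :
    1 - ∑ i ∈ J, x i ≤ ∏ i ∈ J, (1 - x i) := by
  classical
  induction J using Finset.induction_on with
  | empty => simp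
  | @insert a J ha ih =>
    rw [Finset.sum_insert ha, Finset.prod_insert ha]
    have ih' := ih (fun i hi => h0 i (Finset.mem_insert_of_mem hi))
      (fun i hi => h1 i (Finset.mem_insert_of_mem hi))
    have ha0 : 0 ≤ x a := h0 a (Finset.mem_insert_self a J)
    have ha1 : x a ≤ 1 := h1 a (Finset.mem_insert_self a J)
    have hs : (0:ℝ) ≤ ∑ i ∈ J, x i :=
      Finset.sum_nonneg fun i hi => h0 i (Finset.mem_insert_of_mem hi)
    nlinarith

/-- Janson's inequality (with the full ordered correlation sum). -/
lemma janson {p : ℝ} (hp0 : 0 ≤ p) (hp1 : p ≤ 1) (A : Finset ℕ) :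
    ∀ J : Finset (ℕ × ℕ × ℕ), (∀ t ∈ J, trip t ⊆ A) →
      Ev p A (GG J) ≤ Real.exp (-(∑ t ∈ J, p ^ (trip t).card - DD p J)) := by
  intro J
  induction J using Finset.induction_on with
  | empty =>
    intro _
    have : Ev p A (GG ∅) = 1 := by
      have : Ev p A (GG ∅) = Ev p A (fun _ => (1:ℝ)) := Ev_congr fun S _ => by simp [GG]
      rw [this, Ev_one]
    rw [this]
    simp [DD]
  | @insert i J hi ih =>
    intro hJA
    have hJA' : ∀ t ∈ J, trip t ⊆ A := fun t ht => hJA t (Finset.mem_insert_of_mem ht)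
    have hiA : trip i ⊆ A := hJA i (Finset.mem_insert_self i J)
    set J1 : Finset (ℕ × ℕ × ℕ) := J.filter (fun j => (trip i ∩ trip j).Nonempty) with hJ1
    set J0 : Finset (ℕ × ℕ × ℕ) := J.filter (fun j => ¬(trip i ∩ trip j).Nonempty) with hJ0
    set c : ℝ := p ^ (trip i).card - ∑ j ∈ J1, p ^ (trip i ∪ trip j).card with hc
    -- G J₀ ignores the coordinates of trip i
    have hignore : ∀ S, GG J0 S = GG J0 (S \ trip i) := by
      intro S
      unfold GG
      refine Finset.prod_congr rfl fun j hj => ?_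
      have hdisj : Disjoint (trip j) (trip i) := by
        have := (Finset.mem_filter.1 hj).2
        rw [Finset.not_nonempty_iff_eq_empty] at this
        rw [Finset.disjoint_iff_inter_eq_empty, Finset.inter_comm]
        exact this
      unfold ind
      have : trip j ⊆ S \ trip i ↔ trip j ⊆ S := by
        rw [Finset.subset_sdiff]
        exact ⟨fun h => h.1, fun h => ⟨h, hdisj⟩⟩
      rw [if_congr this.symm rfl rfl]
    -- Step (c): independence
    have indep : Ev p A (fun S => ind i S * GG J0 S)
        = p ^ (trip i).card * Ev p A (GG J0) := by
      have := Ev_cube p (trip i) A hiA (GG J0) (fun S => hignore S)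
      refine Eq.trans ?_ this
      exact Ev_congr fun S _ => by unfold ind; rfl
    -- Step (d): Harris
    have harrisStep : ∀ j ∈ J1, Ev p A (fun S => ind i S * ind j S * GG J0 S)
        ≤ p ^ (trip i ∪ trip j).card * Ev p A (GG J0) := by
      intro j hj
      have hjA : trip j ⊆ A := hJA' j (Finset.filter_subset _ _ hj)
      set f : Finset ℕ → ℝ := fun S => ind i S * ind j S with hf
      have hfmono : ∀ S T : Finset ℕ, S ⊆ T → f S ≤ f T := by
        intro S T h
        exact mul_le_mul (ind_mono i h) (ind_mono j h) (ind_nonneg j S)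
          (by have := ind_nonneg i T; linarith [ind_le_one i T])
      have hgmono : ∀ S T : Finset ℕ, S ⊆ T → (1 - GG J0 S) ≤ (1 - GG J0 T) := by
        intro S T h
        have := GG_anti J0 h
        linarith
      have hH := harris hp0 hp1 A f (fun S => 1 - GG J0 S) hfmono hgmono
      have e1 : Ev p A (fun S => f S * (1 - GG J0 S))
          = Ev p A f - Ev p A (fun S => f S * GG J0 S) := by
        rw [← Ev_sub]
        exact Ev_congr fun S _ => by ring
      have e2 : Ev p A (fun S => 1 - GG J0 S) = 1 - Ev p A (GG J0) := by
        rw [show (fun S => 1 - GG J0 S) = (fun S => (fun _ => (1:ℝ)) S - GG J0 S) from rfl,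
          Ev_sub, Ev_one]
      have hEvf : Ev p A f = p ^ (trip i ∪ trip j).card := by
        have hsub : trip i ∪ trip j ⊆ A := Finset.union_subset hiA hjA
        have : Ev p A f = Ev p A (fun S => (if trip i ∪ trip j ⊆ S then (1:ℝ) else 0)) := by
          refine Ev_congr fun S _ => ?_
          by_cases h1 : trip i ⊆ S <;> by_cases h2 : trip j ⊆ S <;>
            simp [hf, ind, h1, h2, Finset.union_subset_iff]
        rw [this, Ev_cube_one hsub]
      rw [e1, e2, hEvf] at hH
      have hG1 : Ev p A (GG J0) ≤ 1 :=
        Ev_le_one hp0 hp1 fun S _ => GG_le_one J0 S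
      have : Ev p A (fun S => ind i S * ind j S * GG J0 S)
          = Ev p A (fun S => f S * GG J0 S) := Ev_congr fun S _ => rfl
      rw [this]
      nlinarith
    -- pointwise lower bound
    have pointwise : ∀ S ∈ A.powerset,
        ind i S * GG J0 S - ∑ j ∈ J1, ind i S * ind j S * GG J0 S
          ≤ ind i S * GG J S := by
      intro S _
      have hsplitG : GG J S = GG J1 S * GG J0 S := by
        unfold GG
        exact (Finset.prod_filter_mul_prod_filter_not J
          (fun j => (trip i ∩ trip j).Nonempty) _).symm
      have hW : 1 - ∑ j ∈ J1, ind j S ≤ GG J1 S :=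
        one_sub_sum_le_prod J1 (fun j => ind j S) (fun j _ => ind_nonneg j S)
          (fun j _ => ind_le_one j S)
      have hnn : 0 ≤ ind i S * GG J0 S := mul_nonneg (ind_nonneg i S) (GG_nonneg J0 S)
      have expand : (ind i S * GG J0 S) * (1 - ∑ j ∈ J1, ind j S)
          = ind i S * GG J0 S - ∑ j ∈ J1, ind i S * ind j S * GG J0 S := by
        rw [mul_sub, mul_one, Finset.mul_sum]
        congr 1
        exact Finset.sum_congr rfl fun j _ => by ring
      calc ind i S * GG J0 S - ∑ j ∈ J1, ind i S * ind j S * GG J0 S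
          = (ind i S * GG J0 S) * (1 - ∑ j ∈ J1, ind j S) := expand.symm
        _ ≤ (ind i S * GG J0 S) * GG J1 S := mul_le_mul_of_nonneg_left hW hnn
        _ = ind i S * (GG J1 S * GG J0 S) := by ring
        _ = ind i S * GG J S := by rw [hsplitG]
    have step_b : Ev p A (fun S => ind i S * GG J0 S)
        - ∑ j ∈ J1, Ev p A (fun S => ind i S * ind j S * GG J0 S)
        ≤ Ev p A (fun S => ind i S * GG J S) := by
      have h := Ev_mono hp0 hp1 pointwise
      rwa [Ev_sub (fun S => ind i S * GG J0 S)
        (fun S => ∑ j ∈ J1, ind i S * ind j S * GG J0 S),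
        Ev_sum J1 (fun j S => ind i S * ind j S * GG J0 S)] at h
    have hJ0J : J0 ⊆ J := Finset.filter_subset _ J
    have hG0G : Ev p A (GG J) ≤ Ev p A (GG J0) :=
      Ev_mono hp0 hp1 fun S _ => GG_subset hJ0J S
    have hGJnn : 0 ≤ Ev p A (GG J) := Ev_nonneg hp0 hp1 fun S _ => GG_nonneg J S
    have key : c * Ev p A (GG J0) ≤ Ev p A (fun S => ind i S * GG J S) := by
      have hsum : ∑ j ∈ J1, Ev p A (fun S => ind i S * ind j S * GG J0 S)
          ≤ (∑ j ∈ J1, p ^ (trip i ∪ trip j).card) * Ev p A (GG J0) := by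
        rw [Finset.sum_mul]
        exact Finset.sum_le_sum harrisStep
      calc c * Ev p A (GG J0)
          = p ^ (trip i).card * Ev p A (GG J0)
            - (∑ j ∈ J1, p ^ (trip i ∪ trip j).card) * Ev p A (GG J0) := by
            rw [hc]; ring
        _ ≤ Ev p A (fun S => ind i S * GG J0 S)
            - ∑ j ∈ J1, Ev p A (fun S => ind i S * ind j S * GG J0 S) :=
            sub_le_sub (le_of_eq indep.symm) hsum
        _ ≤ Ev p A (fun S => ind i S * GG J S) := step_b
    have hinsert : Ev p A (GG (insert i J))
        = Ev p A (GG J) - Ev p A (fun S => ind i S * GG J S) := by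
      rw [← Ev_sub]
      refine Ev_congr fun S _ => ?_
      show (∏ t ∈ insert i J, (1 - ind t S)) = GG J S - ind i S * GG J S
      rw [Finset.prod_insert hi]
      unfold GG
      ring
    have hmainle : Ev p A (GG (insert i J)) ≤ Real.exp (-c) * Ev p A (GG J) := by
      by_cases hcs : 0 ≤ c
      · have h1 : c * Ev p A (GG J) ≤ c * Ev p A (GG J0) :=
          mul_le_mul_of_nonneg_left hG0G hcs
        have h2 : c * Ev p A (GG J) ≤ Ev p A (fun S => ind i S * GG J S) :=
          le_trans h1 key
        have h3 : (1 - c) * Ev p A (GG J) ≤ Real.exp (-c) * Ev p A (GG J) :=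
          mul_le_mul_of_nonneg_right
            (by have := Real.add_one_le_exp (-c); linarith) hGJnn
        have h4 : (1 - c) * Ev p A (GG J) = Ev p A (GG J) - c * Ev p A (GG J) := by ring
        rw [hinsert]
        linarith
      · have h1 : Ev p A (GG (insert i J)) ≤ Ev p A (GG J) :=
          Ev_mono hp0 hp1 fun S _ => GG_subset (Finset.subset_insert i J) S
        have h2 : (1:ℝ) ≤ Real.exp (-c) := by
          nlinarith [Real.add_one_le_exp (-c)]
        nlinarith
    -- Δ bookkeeping
    have e_chi : ∑ t ∈ J, chi p i t = ∑ j ∈ J1, p ^ (trip i ∪ trip j).card := by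
      have e1 : ∑ j ∈ J1, p ^ (trip i ∪ trip j).card
          = ∑ t ∈ J, if (trip i ∩ trip t).Nonempty
              then p ^ (trip i ∪ trip t).card else 0 := Finset.sum_filter _ _
      rw [e1]
      refine Finset.sum_congr rfl fun t ht => ?_
      have hit : i ≠ t := fun h => hi (h ▸ ht)
      simp [chi, hit]
    have hXnn : 0 ≤ ∑ s ∈ J, chi p s i :=
      Finset.sum_nonneg fun s _ => chi_nonneg hp0 s i
    have hDDins : DD p (insert i J)
        = DD p J + ∑ j ∈ J1, p ^ (trip i ∪ trip j).card + ∑ s ∈ J, chi p s i := by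
      unfold DD
      rw [Finset.sum_insert hi, Finset.sum_insert hi]
      have : ∑ s ∈ J, ∑ t ∈ insert i J, chi p s t
          = ∑ s ∈ J, (chi p s i + ∑ t ∈ J, chi p s t) :=
        Finset.sum_congr rfl fun s _ => Finset.sum_insert hi
      rw [this, Finset.sum_add_distrib]
      have hii : chi p i i = 0 := by simp [chi]
      rw [hii, e_chi]
      ring
    have hSins : ∑ t ∈ insert i J, p ^ (trip t).card
        = p ^ (trip i).card + ∑ t ∈ J, p ^ (trip t).card := Finset.sum_insert hi
    calc Ev p A (GG (insert i J)) ≤ Real.exp (-c) * Ev p A (GG J) := hmainle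
      _ ≤ Real.exp (-c) * Real.exp (-(∑ t ∈ J, p ^ (trip t).card - DD p J)) := by
          have := ih hJA'
          exact mul_le_mul_of_nonneg_left this (le_of_lt (Real.exp_pos _))
      _ = Real.exp (-c + -(∑ t ∈ J, p ^ (trip t).card - DD p J)) :=
          (Real.exp_add _ _).symm
      _ ≤ Real.exp (-(∑ t ∈ insert i J, p ^ (trip t).card - DD p (insert i J))) := by
          apply Real.exp_le_exp.mpr
          rw [hSins, hDDins, hc]
          linarith



/-- Probabilistic selection of a good subfamily. -/
lemma exists_subfamily (p : ℝ) {q : ℝ} (hq0 : 0 < q) (hq1 : q ≤ 1)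
    (F : Finset (ℕ × ℕ × ℕ)) :
    ∃ J ∈ F.powerset,
      q * (∑ t ∈ F, p ^ (trip t).card) - q ^ 2 * DD p F
        ≤ ∑ t ∈ J, p ^ (trip t).card - DD p J := by
  set tgt : ℝ := q * (∑ t ∈ F, p ^ (trip t).card) - q ^ 2 * DD p F with htgt
  set g : Finset (ℕ × ℕ × ℕ) → ℝ := fun J => ∑ t ∈ J, p ^ (trip t).card - DD p J with hg
  -- first expectation
  have E1 : Ev q F (fun J => ∑ t ∈ J, p ^ (trip t).card)
      = q * ∑ t ∈ F, p ^ (trip t).card := by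
    have e0 : Ev q F (fun J => ∑ t ∈ J, p ^ (trip t).card)
        = Ev q F (fun J => ∑ t ∈ F, (if t ∈ J then p ^ (trip t).card else 0)) := by
      refine Ev_congr fun J hJ => ?_
      rw [Finset.sum_ite_mem, Finset.inter_eq_right.mpr (Finset.mem_powerset.1 hJ)]
    rw [e0, Ev_sum, Finset.mul_sum]
    refine Finset.sum_congr rfl fun t ht => ?_
    have e1 : Ev q F (fun J => if t ∈ J then p ^ (trip t).card else 0)
        = Ev q F (fun J => p ^ (trip t).card * (if ({t} : Finset (ℕ×ℕ×ℕ)) ⊆ J then 1 else 0)) := by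
      refine Ev_congr fun J _ => ?_
      by_cases h : t ∈ J <;> simp [Finset.singleton_subset_iff, h]
    rw [e1, Ev_smul, Ev_cube_one (Finset.singleton_subset_iff.mpr ht),
      Finset.card_singleton, pow_one]
    ring
  -- second expectation
  have E2 : Ev q F (DD p) = q ^ 2 * DD p F := by
    have e0 : Ev q F (DD p)
        = Ev q F (fun J => ∑ s ∈ F, ∑ t ∈ F,
            (if s ∈ J then (if t ∈ J then chi p s t else 0) else 0)) := by
      refine Ev_congr fun J hJ => ?_
      have hJF := Finset.mem_powerset.1 hJ
      unfold DD
      rw [show (∑ s ∈ F, ∑ t ∈ F, (if s ∈ J then (if t ∈ J then chi p s t else 0) else 0))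
          = ∑ s ∈ F, (if s ∈ J then (∑ t ∈ F, if t ∈ J then chi p s t else 0) else 0) from
        Finset.sum_congr rfl fun s _ => by split <;> simp]
      rw [Finset.sum_ite_mem, Finset.inter_eq_right.mpr hJF]
      refine Finset.sum_congr rfl fun s _ => ?_
      rw [Finset.sum_ite_mem, Finset.inter_eq_right.mpr hJF]
    rw [e0, Ev_sum]
    unfold DD
    rw [Finset.mul_sum]
    refine Finset.sum_congr rfl fun s hs => ?_
    rw [Ev_sum, Finset.mul_sum]
    refine Finset.sum_congr rfl fun t ht => ?_
    by_cases hst : s = t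
    · subst hst
      have : Ev q F (fun J => if s ∈ J then (if s ∈ J then chi p s s else 0) else 0)
          = Ev q F (fun _ => (0:ℝ)) := by
        refine Ev_congr fun J _ => ?_
        have : chi p s s = 0 := by simp [chi]
        split <;> simp [this]
      rw [this]
      have : chi p s s = 0 := by simp [chi]
      simp [Ev, this]
    · have hsub : ({s, t} : Finset (ℕ×ℕ×ℕ)) ⊆ F := by
        rw [Finset.insert_subset_iff, Finset.singleton_subset_iff]
        exact ⟨hs, ht⟩
      have e1 : Ev q F (fun J => if s ∈ J then (if t ∈ J then chi p s t else 0) else 0)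
          = Ev q F (fun J => chi p s t * (if ({s, t} : Finset (ℕ×ℕ×ℕ)) ⊆ J then 1 else 0)) := by
        refine Ev_congr fun J _ => ?_
        by_cases h1 : s ∈ J <;> by_cases h2 : t ∈ J <;>
          simp [Finset.insert_subset_iff, Finset.singleton_subset_iff, h1, h2]
      have hcard : ({s, t} : Finset (ℕ×ℕ×ℕ)).card = 2 := by
        rw [Finset.card_insert_of_notMem (by simpa using hst), Finset.card_singleton]
      rw [e1, Ev_smul, Ev_cube_one hsub, hcard]
      ring
  have Etot : Ev q F g = tgt := by
    rw [hg, Ev_sub, E1, E2, htgt]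
  by_contra hcon
  push_neg at hcon
  have hcon' : ∀ J ∈ F.powerset, g J < tgt := by
    intro J hJ
    exact hcon J hJ
  have hwnn : ∀ J ∈ F.powerset, (0:ℝ) ≤ q ^ J.card * (1 - q) ^ (F \ J).card := by
    intro J _
    have : (0:ℝ) ≤ 1 - q := by linarith
    positivity
  have hlt : Ev q F g < Ev q F (fun _ => tgt) := by
    unfold Ev
    refine Finset.sum_lt_sum (fun J hJ => mul_le_mul_of_nonneg_left
      (le_of_lt (hcon' J hJ)) (hwnn J hJ)) ⟨F, Finset.mem_powerset_self F, ?_⟩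
    have hpos : (0:ℝ) < q ^ F.card * (1 - q) ^ (F \ F).card := by
      rw [Finset.sdiff_self, Finset.card_empty, pow_zero, mul_one]
      positivity
    exact mul_lt_mul_of_pos_left (hcon' F (Finset.mem_powerset_self F)) hpos
  have : Ev q F (fun _ => tgt) = tgt := by
    rw [show (fun _ : Finset (ℕ×ℕ×ℕ) => tgt) = (fun _ => tgt * 1) from by funext; ring,
      Ev_smul, Ev_one, mul_one]
  rw [Etot, this] at hlt
  exact lt_irrefl _ hlt


section Counting

variable {n : ℕ} {F : Finset (ℕ × ℕ × ℕ)}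

/-- Abbreviation for the Schur-family hypothesis. -/
def SchurFam (F : Finset (ℕ × ℕ × ℕ)) (n : ℕ) : Prop :=
  ∀ f ∈ F, f.1 ∈ Finset.Icc 1 n ∧ f.2.1 ∈ Finset.Icc 1 n ∧
    f.2.2 ∈ Finset.Icc 1 n ∧ f.1 + f.2.1 = f.2.2 ∧ f.1 ≠ f.2.1

lemma trip_card3 (hF : SchurFam F n) {t : ℕ × ℕ × ℕ} (ht : t ∈ F) :
    (trip t).card = 3 := by
  obtain ⟨h1, h2, h3, h4, h5⟩ := hF t ht
  rw [Finset.mem_Icc] at h1 h2 h3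
  unfold trip
  rw [Finset.card_insert_of_notMem, Finset.card_insert_of_notMem, Finset.card_singleton]
  · simp only [Finset.mem_singleton]; omega
  · simp only [Finset.mem_insert, Finset.mem_singleton]; omega

lemma trip_subset (hF : SchurFam F n) {t : ℕ × ℕ × ℕ} (ht : t ∈ F) :
    trip t ⊆ Finset.Icc 1 n := by
  obtain ⟨h1, h2, h3, _, _⟩ := hF t ht
  unfold trip
  rw [Finset.insert_subset_iff, Finset.insert_subset_iff, Finset.singleton_subset_iff]
  exact ⟨h1, h2, h3⟩

lemma card_F_le (hF : SchurFam F n) : F.card ≤ n * n := by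
  have h := Finset.card_le_card_of_injOn (fun t => (t.1, t.2.1))
    (s := F) (t := Finset.Icc 1 n ×ˢ Finset.Icc 1 n)
    (fun t ht => Finset.mem_product.mpr ⟨(hF t ht).1, (hF t ht).2.1⟩) ?_
  · calc F.card ≤ (Finset.Icc 1 n ×ˢ Finset.Icc 1 n).card := h
      _ = n * n := by rw [Finset.card_product]; simp
  · rintro ⟨x, y, z⟩ ha ⟨x', y', z'⟩ hb hab
    simp only [Prod.mk.injEq] at hab
    have e1 := (hF _ ha).2.2.2.1
    have e2 := (hF _ hb).2.2.2.1
    simp only at e1 e2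
    simp only [Prod.mk.injEq]
    omega

lemma card_with_elem (hF : SchurFam F n) (a : ℕ) :
    (F.filter (fun t => a ∈ trip t)).card ≤ 3 * n := by
  have hsub : F.filter (fun t => a ∈ trip t)
      ⊆ (F.filter (fun t => t.1 = a)) ∪ (F.filter (fun t => t.2.1 = a))
        ∪ (F.filter (fun t => t.2.2 = a)) := by
    intro t ht
    rcases Finset.mem_filter.1 ht with ⟨htF, hta⟩
    have : a = t.1 ∨ a = t.2.1 ∨ a = t.2.2 := by simpa [trip] using hta
    simp only [Finset.mem_union, Finset.mem_filter]
    rcases this with h | h | h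
    · exact Or.inl (Or.inl ⟨htF, h.symm⟩)
    · exact Or.inl (Or.inr ⟨htF, h.symm⟩)
    · exact Or.inr ⟨htF, h.symm⟩
  have h1 : (F.filter (fun t => t.1 = a)).card ≤ n := by
    have h := Finset.card_le_card_of_injOn (fun t => t.2.1)
      (s := F.filter (fun t => t.1 = a)) (t := Finset.Icc 1 n)
      (fun t ht => (hF t (Finset.mem_filter.1 ht).1).2.1) ?_
    · simpa using h
    · rintro ⟨x, y, z⟩ ha' ⟨x', y', z'⟩ hb hab
      have e1 := (hF _ (Finset.mem_filter.1 ha').1).2.2.2.1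
      have e2 := (hF _ (Finset.mem_filter.1 hb).1).2.2.2.1
      have f1 := (Finset.mem_filter.1 ha').2
      have f2 := (Finset.mem_filter.1 hb).2
      simp only at e1 e2 f1 f2 hab
      simp only [Prod.mk.injEq]
      omega
  have h2 : (F.filter (fun t => t.2.1 = a)).card ≤ n := by
    have h := Finset.card_le_card_of_injOn (fun t => t.1)
      (s := F.filter (fun t => t.2.1 = a)) (t := Finset.Icc 1 n)
      (fun t ht => (hF t (Finset.mem_filter.1 ht).1).1) ?_
    · simpa using h
    · rintro ⟨x, y, z⟩ ha' ⟨x', y', z'⟩ hb hab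
      have e1 := (hF _ (Finset.mem_filter.1 ha').1).2.2.2.1
      have e2 := (hF _ (Finset.mem_filter.1 hb).1).2.2.2.1
      have f1 := (Finset.mem_filter.1 ha').2
      have f2 := (Finset.mem_filter.1 hb).2
      simp only at e1 e2 f1 f2 hab
      simp only [Prod.mk.injEq]
      omega
  have h3 : (F.filter (fun t => t.2.2 = a)).card ≤ n := by
    have h := Finset.card_le_card_of_injOn (fun t => t.1)
      (s := F.filter (fun t => t.2.2 = a)) (t := Finset.Icc 1 n)
      (fun t ht => (hF t (Finset.mem_filter.1 ht).1).1) ?_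
    · simpa using h
    · rintro ⟨x, y, z⟩ ha' ⟨x', y', z'⟩ hb hab
      have e1 := (hF _ (Finset.mem_filter.1 ha').1).2.2.2.1
      have e2 := (hF _ (Finset.mem_filter.1 hb).1).2.2.2.1
      have f1 := (Finset.mem_filter.1 ha').2
      have f2 := (Finset.mem_filter.1 hb).2
      simp only at e1 e2 f1 f2 hab
      simp only [Prod.mk.injEq]
      omega
  calc (F.filter (fun t => a ∈ trip t)).card
      ≤ ((F.filter (fun t => t.1 = a)) ∪ (F.filter (fun t => t.2.1 = a))
          ∪ (F.filter (fun t => t.2.2 = a))).card := Finset.card_le_card hsub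
    _ ≤ ((F.filter (fun t => t.1 = a)) ∪ (F.filter (fun t => t.2.1 = a))).card
        + (F.filter (fun t => t.2.2 = a)).card := Finset.card_union_le _ _
    _ ≤ (F.filter (fun t => t.1 = a)).card + (F.filter (fun t => t.2.1 = a)).card
        + (F.filter (fun t => t.2.2 = a)).card := by
        have := Finset.card_union_le (F.filter (fun t => t.1 = a))
          (F.filter (fun t => t.2.1 = a))
        omega
    _ ≤ 3 * n := by omega

lemma card_close (hF : SchurFam F n) {s : ℕ × ℕ × ℕ} (hs : s ∈ F) :
    (F.filter (fun t => s ≠ t ∧ 2 ≤ (trip s ∩ trip t).card)).card ≤ 27 := by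
  classical
  set G := F.filter (fun t => s ≠ t ∧ 2 ≤ (trip s ∩ trip t).card) with hG
  -- at most one coordinate of t lies outside trip s
  have hkey : ∀ t ∈ G, (t.1 ∉ trip s → t.2.1 ∈ trip s ∧ t.2.2 ∈ trip s)
      ∧ (t.1 ∈ trip s → t.2.1 ∉ trip s → t.2.2 ∈ trip s) := by
    intro t ht
    rcases Finset.mem_filter.1 ht with ⟨htF, _, hcard⟩
    have hmem : ∀ x ∈ trip s ∩ trip t, x = t.1 ∨ x = t.2.1 ∨ x = t.2.2 := by
      intro x hx
      have := (Finset.mem_inter.1 hx).2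
      simpa [trip] using this
    have haux : ∀ (u v : ℕ), u ∉ trip s →
        (∀ x ∈ trip s ∩ trip t, x = u ∨ x = v) → False := by
      intro u v hu hsub
      have : trip s ∩ trip t ⊆ {v} := by
        intro x hx
        rcases hsub x hx with rfl | rfl
        · exact absurd (Finset.mem_inter.1 hx).1 hu
        · exact Finset.mem_singleton_self _
      have := Finset.card_le_card this
      rw [Finset.card_singleton] at this
      omega
    constructor
    · intro h1
      constructor
      · by_contra h2
        exact haux t.2.1 t.2.2 h2 (fun x hx => by
          rcases hmem x hx with rfl | rfl | rfl
          · exact absurd (Finset.mem_inter.1 hx).1 h1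
          · exact Or.inl rfl
          · exact Or.inr rfl)
      · by_contra h2
        exact haux t.2.2 t.2.1 h2 (fun x hx => by
          rcases hmem x hx with rfl | rfl | rfl
          · exact absurd (Finset.mem_inter.1 hx).1 h1
          · exact Or.inr rfl
          · exact Or.inl rfl)
    · intro h1 h2
      by_contra h3
      exact haux t.2.2 t.1 h3 (fun x hx => by
        rcases hmem x hx with rfl | rfl | rfl
        · exact Or.inr rfl
        · exact absurd (Finset.mem_inter.1 hx).1 h2
        · exact Or.inl rfl)
  have hinj := Finset.card_le_card_of_injOn
    (fun t => if t.1 ∉ trip s then (t.2.1, t.2.2, (0:ℕ))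
      else if t.2.1 ∉ trip s then (t.1, t.2.2, 1) else (t.1, t.2.1, 2))
    (s := G) (t := trip s ×ˢ (trip s ×ˢ Finset.range 3)) ?_ ?_
  · calc G.card ≤ (trip s ×ˢ (trip s ×ˢ Finset.range 3)).card := hinj
      _ = 27 := by
        rw [Finset.card_product, Finset.card_product, trip_card3 hF hs,
          Finset.card_range]
  · intro t ht
    rcases hkey t ht with ⟨k1, k2⟩
    simp only
    by_cases c1 : t.1 ∈ trip s
    · rw [if_neg (not_not_intro c1)]
      by_cases c2 : t.2.1 ∈ trip s
      · rw [if_neg (not_not_intro c2)]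
        exact Finset.mem_product.mpr ⟨c1, Finset.mem_product.mpr ⟨c2, by simp⟩⟩
      · rw [if_pos c2]
        exact Finset.mem_product.mpr ⟨c1, Finset.mem_product.mpr ⟨k2 c1 c2, by simp⟩⟩
    · rw [if_pos c1]
      exact Finset.mem_product.mpr ⟨(k1 c1).1, Finset.mem_product.mpr ⟨(k1 c1).2, by simp⟩⟩
  · rintro ⟨x, y, z⟩ ha ⟨x', y', z'⟩ hb hab
    have e1 := (hF _ (Finset.mem_filter.1 ha).1).2.2.2.1
    have e2 := (hF _ (Finset.mem_filter.1 hb).1).2.2.2.1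
    simp only at e1 e2
    by_cases c1 : x ∈ trip s <;> by_cases c2 : y ∈ trip s <;>
      by_cases c1' : x' ∈ trip s <;> by_cases c2' : y' ∈ trip s <;>
      simp only [c1, c2, c1', c2', not_true, not_false_iff, if_true, if_false,
        if_pos, if_neg, Prod.mk.injEq] at hab <;>
      · simp only [Prod.mk.injEq]
        omega

end Counting


lemma DD_le {n : ℕ} {F : Finset (ℕ × ℕ × ℕ)} (hF : SchurFam F n) {p : ℝ}
    (hp0 : 0 ≤ p) (hp1 : p ≤ 1) :
    DD p F ≤ (F.card : ℝ) * (27 * p ^ 3 + 9 * n * p ^ 5) := by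
  classical
  unfold DD
  have hinner : ∀ s ∈ F, ∑ t ∈ F, chi p s t ≤ 27 * p ^ 3 + 9 * n * p ^ 5 := by
    intro s hs
    set A2 := F.filter (fun t => s ≠ t ∧ 2 ≤ (trip s ∩ trip t).card) with hA2
    set A1 := F.filter (fun t => s ≠ t ∧ (trip s ∩ trip t).Nonempty
      ∧ (trip s ∩ trip t).card ≤ 1) with hA1
    have hsub : A2 ∪ A1 ⊆ F :=
      Finset.union_subset (Finset.filter_subset _ _) (Finset.filter_subset _ _)
    have hvan : ∀ t ∈ F, t ∉ A2 ∪ A1 → chi p s t = 0 := by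
      intro t htF htn
      unfold chi
      rw [if_neg]
      rintro ⟨hne, hnon⟩
      apply htn
      rw [Finset.mem_union, hA2, hA1]
      by_cases h2 : 2 ≤ (trip s ∩ trip t).card
      · exact Or.inl (Finset.mem_filter.mpr ⟨htF, hne, h2⟩)
      · exact Or.inr (Finset.mem_filter.mpr ⟨htF, hne, hnon, by omega⟩)
    have hsplit : ∑ t ∈ F, chi p s t = ∑ t ∈ A2 ∪ A1, chi p s t :=
      (Finset.sum_subset hsub hvan).symm
    have hdisj : Disjoint A2 A1 := by
      rw [Finset.disjoint_left]
      intro t h2 h1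
      have := (Finset.mem_filter.1 h2).2.2
      have := (Finset.mem_filter.1 h1).2.2.2
      omega
    have hb2 : ∑ t ∈ A2, chi p s t ≤ 27 * p ^ 3 := by
      have hbd : ∀ t ∈ A2, chi p s t ≤ p ^ 3 := by
        intro t ht
        unfold chi
        split
        · refine pow_le_pow_of_le_one hp0 hp1 ?_
          calc 3 = (trip s).card := (trip_card3 hF hs).symm
            _ ≤ (trip s ∪ trip t).card := Finset.card_le_card Finset.subset_union_left
        · positivity
      calc ∑ t ∈ A2, chi p s t ≤ ∑ _t ∈ A2, p ^ 3 := Finset.sum_le_sum hbd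
        _ = A2.card * p ^ 3 := by rw [Finset.sum_const, nsmul_eq_mul]
        _ ≤ 27 * p ^ 3 := by
            have h27 : (A2.card : ℝ) ≤ 27 := by
              exact_mod_cast card_close hF hs
            have : (0:ℝ) ≤ p ^ 3 := by positivity
            nlinarith
    have hb1 : ∑ t ∈ A1, chi p s t ≤ 9 * n * p ^ 5 := by
      have hbd : ∀ t ∈ A1, chi p s t = p ^ 5 := by
        intro t ht
        rcases Finset.mem_filter.1 ht with ⟨htF, hne, hnon, hle⟩
        have h1 : (trip s ∩ trip t).card = 1 := by
          have := Finset.card_pos.mpr hnon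
          omega
        have hu : (trip s ∪ trip t).card = 5 := by
          have := Finset.card_union_add_card_inter (trip s) (trip t)
          rw [h1, trip_card3 hF hs, trip_card3 hF htF] at this
          omega
        unfold chi
        rw [if_pos ⟨hne, hnon⟩, hu]
      have hcard1 : (A1.card : ℝ) ≤ 9 * n := by
        have hsub1 : A1 ⊆ (F.filter (fun t => s.1 ∈ trip t))
            ∪ (F.filter (fun t => s.2.1 ∈ trip t))
            ∪ (F.filter (fun t => s.2.2 ∈ trip t)) := by
          intro t ht
          rcases Finset.mem_filter.1 ht with ⟨htF, _, hnon, _⟩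
          obtain ⟨x, hx⟩ := hnon
          rcases Finset.mem_inter.1 hx with ⟨hx1, hx2⟩
          have : x = s.1 ∨ x = s.2.1 ∨ x = s.2.2 := by simpa [trip] using hx1
          simp only [Finset.mem_union, Finset.mem_filter]
          rcases this with rfl | rfl | rfl
          · exact Or.inl (Or.inl ⟨htF, hx2⟩)
          · exact Or.inl (Or.inr ⟨htF, hx2⟩)
          · exact Or.inr ⟨htF, hx2⟩
        have hc : A1.card ≤ 9 * n := by
          have h1 := card_with_elem hF s.1
          have h2 := card_with_elem hF s.2.1
          have h3 := card_with_elem hF s.2.2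
          have hcu := Finset.card_le_card hsub1
          have hcu1 := Finset.card_union_le
            ((F.filter (fun t => s.1 ∈ trip t)) ∪ (F.filter (fun t => s.2.1 ∈ trip t)))
            (F.filter (fun t => s.2.2 ∈ trip t))
          have hcu2 := Finset.card_union_le (F.filter (fun t => s.1 ∈ trip t))
            (F.filter (fun t => s.2.1 ∈ trip t))
          omega
        calc (A1.card : ℝ) ≤ ((9 * n : ℕ) : ℝ) := by exact_mod_cast hc
          _ = 9 * n := by push_cast; ring
      calc ∑ t ∈ A1, chi p s t = ∑ _t ∈ A1, p ^ 5 := Finset.sum_congr rfl hbd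
        _ = A1.card * p ^ 5 := by rw [Finset.sum_const, nsmul_eq_mul]
        _ ≤ 9 * n * p ^ 5 := by
            have : (0:ℝ) ≤ p ^ 5 := by positivity
            nlinarith
    rw [hsplit, Finset.sum_union hdisj]
    linarith
  calc ∑ s ∈ F, ∑ t ∈ F, chi p s t
      ≤ ∑ _s ∈ F, (27 * p ^ 3 + 9 * n * p ^ 5) := Finset.sum_le_sum hinner
    _ = (F.card : ℝ) * (27 * p ^ 3 + 9 * n * p ^ 5) := by
        rw [Finset.sum_const, nsmul_eq_mul]

lemma randProb_eq (n : ℕ) (p : ℝ) (F : Finset (ℕ × ℕ × ℕ)) :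
    randProb n p {S : Finset ℕ | ∀ f ∈ F, ¬(f.1 ∈ S ∧ f.2.1 ∈ S ∧ f.2.2 ∈ S)}
      = Ev p (Finset.Icc 1 n) (GG F) := by
  classical
  unfold randProb Ev
  refine Finset.sum_congr rfl fun S hS => ?_
  have hScard : (Finset.Icc 1 n \ S).card = n - S.card := by
    rw [Finset.card_sdiff_of_subset (Finset.mem_powerset.1 hS), Nat.card_Icc]
    omega
  by_cases hSE : S ∈ {S : Finset ℕ | ∀ f ∈ F, ¬(f.1 ∈ S ∧ f.2.1 ∈ S ∧ f.2.2 ∈ S)}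
  · rw [Set.indicator_of_mem hSE]
    have hGG : GG F S = 1 := by
      refine Finset.prod_eq_one fun t ht => ?_
      have h := hSE t ht
      have hind : ind t S = 0 := by
        unfold ind
        rw [if_neg]
        intro hsub
        exact h ⟨hsub (by simp [trip]), hsub (by simp [trip]), hsub (by simp [trip])⟩
      rw [hind]; ring
    rw [hGG, hScard, mul_one]
  · rw [Set.indicator_of_notMem hSE]
    simp only [Set.mem_setOf_eq] at hSE
    push_neg at hSE
    obtain ⟨t, htF, ht1, ht2, ht3⟩ := hSE
    have hGG : GG F S = 0 := by
      refine Finset.prod_eq_zero htF ?_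
      have hind : ind t S = 1 := by
        unfold ind
        rw [if_pos]
        unfold trip
        rw [Finset.insert_subset_iff, Finset.insert_subset_iff,
          Finset.singleton_subset_iff]
        exact ⟨ht1, ht2, ht3⟩
      rw [hind]; ring
    rw [hGG, mul_zero]

end Stmt5Aux

set_option maxHeartbeats 1000000 in
open Stmt5Aux in
/-- Lemma 11, Janson for Schur triples: for every `ξ > 0` and `C > 0`
there is `ζ > 0` such that for every `n ≥ 1` and `p ∈ [0,1]` with `p ≤ C·n^{-1/2}`, if
`F ⊆ [n]³` is a family of non-degenerate Schur triples with `|F| ≥ ξ·n²`, then the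
probability that no triple of `F` lies entirely in `[n]_p` is at most `exp(-ζ·n²·p³)`. -/
theorem stmt5 (ξ C : ℝ) (hξ : 0 < ξ) (hC : 0 < C) :
    ∃ ζ : ℝ, 0 < ζ ∧ ∀ n : ℕ, 0 < n → ∀ p : ℝ, p ∈ Set.Icc (0 : ℝ) 1 →
      p ≤ C * (n : ℝ) ^ (-(1 : ℝ) / 2) →
      ∀ F : Finset (ℕ × ℕ × ℕ),
        (∀ f ∈ F, f.1 ∈ Finset.Icc 1 n ∧ f.2.1 ∈ Finset.Icc 1 n ∧
          f.2.2 ∈ Finset.Icc 1 n ∧ f.1 + f.2.1 = f.2.2 ∧ f.1 ≠ f.2.1) →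
        ξ * (n : ℝ) ^ 2 ≤ (F.card : ℝ) →
        randProb n p {S : Finset ℕ | ∀ f ∈ F, ¬(f.1 ∈ S ∧ f.2.1 ∈ S ∧ f.2.2 ∈ S)} ≤
          Real.exp (-ζ * (n : ℝ) ^ 2 * p ^ 3) := by
  classical
  set K : ℝ := 27 + 9 * C ^ 2 with hK
  have hKpos : 0 < K := by positivity
  set q : ℝ := min 1 (ξ / (2 * K)) with hq
  have hq0 : 0 < q := lt_min one_pos (by positivity)
  have hq1 : q ≤ 1 := min_le_left _ _
  refine ⟨q * ξ / 2, by positivity, ?_⟩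
  intro n hn p hp hpC F hF hcard
  obtain ⟨hp0, hp1⟩ := hp
  have hSch : SchurFam F n := hF
  have hnpos : (0:ℝ) < n := by exact_mod_cast hn
  have hnp2 : (n:ℝ) * p ^ 2 ≤ C ^ 2 := by
    have h1 : p ^ 2 ≤ (C * (n:ℝ) ^ (-(1:ℝ)/2)) ^ 2 := by
      have := pow_le_pow_left₀ hp0 hpC 2
      exact this
    have h2 : ((n:ℝ) ^ (-(1:ℝ)/2)) ^ 2 = ((n:ℝ))⁻¹ := by
      rw [← Real.rpow_natCast ((n:ℝ) ^ (-(1:ℝ)/2)) 2, ← Real.rpow_mul hnpos.le]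
      norm_num
      exact Real.rpow_neg_one _
    calc (n:ℝ) * p ^ 2 ≤ (n:ℝ) * (C * (n:ℝ) ^ (-(1:ℝ)/2)) ^ 2 := by nlinarith
      _ = C ^ 2 * ((n:ℝ) * ((n:ℝ) ^ (-(1:ℝ)/2)) ^ 2) := by ring
      _ = C ^ 2 := by rw [h2]; field_simp
  obtain ⟨J, hJmem, hJgood⟩ := exists_subfamily p hq0 hq1 F
  have hJF := Finset.mem_powerset.1 hJmem
  have hjanson := janson hp0 hp1 (Finset.Icc 1 n) J
    (fun t ht => trip_subset hSch (hJF ht))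
  have hmono : Ev p (Finset.Icc 1 n) (GG F) ≤ Ev p (Finset.Icc 1 n) (GG J) :=
    Ev_mono hp0 hp1 fun S _ => GG_subset hJF S
  have hsumF : ∑ t ∈ F, p ^ (trip t).card = (F.card : ℝ) * p ^ 3 := by
    rw [Finset.sum_congr rfl (fun t ht => by rw [trip_card3 hSch ht]),
      Finset.sum_const, nsmul_eq_mul]
  have hcF : (F.card : ℝ) ≤ (n:ℝ) ^ 2 := by
    have := card_F_le hSch
    calc (F.card : ℝ) ≤ ((n * n : ℕ) : ℝ) := by exact_mod_cast this
      _ = (n:ℝ) ^ 2 := by push_cast; ring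
  have hDD : DD p F ≤ K * ((n:ℝ) ^ 2 * p ^ 3) := by
    have h := DD_le hSch hp0 hp1
    calc DD p F ≤ (F.card : ℝ) * (27 * p ^ 3 + 9 * n * p ^ 5) := h
      _ ≤ (n:ℝ) ^ 2 * (27 * p ^ 3 + 9 * n * p ^ 5) := by
          refine mul_le_mul_of_nonneg_right hcF ?_
          positivity
      _ = 27 * ((n:ℝ) ^ 2 * p ^ 3) + 9 * ((n:ℝ) * p ^ 2) * ((n:ℝ) ^ 2 * p ^ 3) := by
          ring
      _ ≤ 27 * ((n:ℝ) ^ 2 * p ^ 3) + 9 * C ^ 2 * ((n:ℝ) ^ 2 * p ^ 3) := by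
          have hnn : (0:ℝ) ≤ (n:ℝ) ^ 2 * p ^ 3 := by positivity
          nlinarith
      _ = K * ((n:ℝ) ^ 2 * p ^ 3) := by rw [hK]; ring
  have hsF : ξ * ((n:ℝ) ^ 2 * p ^ 3) ≤ ∑ t ∈ F, p ^ (trip t).card := by
    rw [hsumF]
    have hp3 : (0:ℝ) ≤ p ^ 3 := by positivity
    nlinarith
  have hqK : q * K ≤ ξ / 2 := by
    have hle : q ≤ ξ / (2 * K) := min_le_right _ _
    calc q * K ≤ (ξ / (2 * K)) * K := mul_le_mul_of_nonneg_right hle hKpos.le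
      _ = ξ / 2 := by field_simp
  have hgoal : q * ξ / 2 * ((n:ℝ) ^ 2 * p ^ 3)
      ≤ ∑ t ∈ J, p ^ (trip t).card - DD p J := by
    have t1 : q * (ξ * ((n:ℝ) ^ 2 * p ^ 3)) ≤ q * (∑ t ∈ F, p ^ (trip t).card) :=
      mul_le_mul_of_nonneg_left hsF hq0.le
    have t2 : q ^ 2 * DD p F ≤ q ^ 2 * (K * ((n:ℝ) ^ 2 * p ^ 3)) :=
      mul_le_mul_of_nonneg_left hDD (sq_nonneg q)
    have t3 : ξ / 2 ≤ ξ - q * K := by linarith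
    have hnn : (0:ℝ) ≤ (n:ℝ) ^ 2 * p ^ 3 := by positivity
    have t4 : q * ξ / 2 * ((n:ℝ) ^ 2 * p ^ 3)
        ≤ (q * (ξ - q * K)) * ((n:ℝ) ^ 2 * p ^ 3) := by
      have := mul_le_mul_of_nonneg_left t3 hq0.le
      nlinarith
    have t5 : (q * (ξ - q * K)) * ((n:ℝ) ^ 2 * p ^ 3)
        = q * (ξ * ((n:ℝ) ^ 2 * p ^ 3)) - q ^ 2 * (K * ((n:ℝ) ^ 2 * p ^ 3)) := by ring
    calc q * ξ / 2 * ((n:ℝ) ^ 2 * p ^ 3)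
        ≤ (q * (ξ - q * K)) * ((n:ℝ) ^ 2 * p ^ 3) := t4
      _ = q * (ξ * ((n:ℝ) ^ 2 * p ^ 3)) - q ^ 2 * (K * ((n:ℝ) ^ 2 * p ^ 3)) := t5
      _ ≤ q * (∑ t ∈ F, p ^ (trip t).card) - q ^ 2 * (K * ((n:ℝ) ^ 2 * p ^ 3)) := by
          linarith [t1]
      _ ≤ q * (∑ t ∈ F, p ^ (trip t).card) - q ^ 2 * DD p F := by linarith [t2]
      _ ≤ ∑ t ∈ J, p ^ (trip t).card - DD p J := hJgood
  rw [randProb_eq]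
  refine le_trans hmono (le_trans hjanson ?_)
  apply Real.exp_le_exp.mpr
  have : -(q * ξ / 2) * (n:ℝ) ^ 2 * p ^ 3 = -(q * ξ / 2 * ((n:ℝ) ^ 2 * p ^ 3)) := by ring
  rw [this]
  linarith
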